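/- Let G = (V, E, w) be a weighted directed graph with positive edge weights on n = |V| vertices, and let k ≥ 1 be an integer such that for every ordered pair of vertices (x,y) the number of shortest paths from x to y in G is at most k. Then for every vertex v ∈ V, the number of distinct edges that lie on shortest paths through v is at most 2·k·n; in particular ν*(G) ≤ 2kn. -/

import Mathlib

namespace Apasp

/-- A weighted directed graph on a subset of the vertex type `V`. -/
structure WDigraph (V : Type*) where
  verts : Finset V
  edges : Finset (V × V)
  edges_sub : edges ⊆ verts ×ˢ verts
  w : V × V → ℝ
  w_pos : ∀ e ∈ edges, 0 < w e

namespace WDigraph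

variable {V : Type*}

/-- The list of consecutive vertex pairs (edges) of a vertex list. -/
def pathEdges (p : List V) : List (V × V) := p.zip p.tail

/-- `p` is a path of `G` (a nonempty vertex list whose vertices are in `G`
and whose consecutive pairs are edges of `G`). -/
def IsPath (G : WDigraph V) (p : List V) : Prop :=
  p ≠ [] ∧ (∀ v ∈ p, v ∈ G.verts) ∧ ∀ e ∈ pathEdges p, e ∈ G.edges

/-- The weight of a path: the sum of the weights of its edges. -/
def weight (G : WDigraph V) (p : List V) : ℝ :=
  ((pathEdges p).map G.w).sum

/-- `p` is a path of `G` from `x` to `y`. -/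
def IsPathFT (G : WDigraph V) (p : List V) (x y : V) : Prop :=
  G.IsPath p ∧ p.head? = some x ∧ p.getLast? = some y

/-- `p` is a shortest path of `G` from `x` to `y`. -/
def IsSPFT (G : WDigraph V) (p : List V) (x y : V) : Prop :=
  G.IsPathFT p x y ∧ ∀ q, G.IsPathFT q x y → G.weight p ≤ G.weight q

/-- `p` is a shortest path of `G` (between its endpoints). -/
def IsSP (G : WDigraph V) (p : List V) : Prop :=
  ∃ x y, G.IsSPFT p x y

/-- The shortest-path distance from `x` to `y` in `G`. -/
noncomputable def dist (G : WDigraph V) (x y : V) : ℝ :=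
  sInf {r | ∃ p, G.IsPathFT p x y ∧ G.weight p = r}

/-- `p` is a locally shortest path from `x` to `y`: removing the first edge,
resp. the last edge, yields a shortest path. -/
def IsLSP (G : WDigraph V) (p : List V) (x y : V) : Prop :=
  G.IsPathFT p x y ∧ G.IsSP p.tail ∧ G.IsSP p.dropLast

/-- The first edge of the list `p` is `(x, a)`. -/
def FirstEdge (p : List V) (x a : V) : Prop := ∃ q, p = x :: a :: q

/-- The last edge of the list `p` is `(b, y)`. -/
def LastEdge (p : List V) (b y : V) : Prop := ∃ r, p = r ++ [b, y]

/-- `((x,a),(b,y),wt)` is a locally shortest tuple of `G`. -/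
def IsLST (G : WDigraph V) (x a b y : V) (wt : ℝ) : Prop :=
  ∃ p, G.IsLSP p x y ∧ FirstEdge p x a ∧ LastEdge p b y ∧ G.weight p = wt

/-- `((x,a),(b,y),wt)` is a locally shortest tuple of `G`, witnessed by a
locally shortest path containing the vertex `v`. -/
def IsLSTThru (G : WDigraph V) (v x a b y : V) (wt : ℝ) : Prop :=
  ∃ p, G.IsLSP p x y ∧ FirstEdge p x a ∧ LastEdge p b y ∧ G.weight p = wt ∧ v ∈ p

/-- The set of edges of `G` that lie on shortest paths through the vertex `v`. -/
def spEdgesThru (G : WDigraph V) (v : V) : Set (V × V) :=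
  {e | ∃ p, G.IsSP p ∧ v ∈ p ∧ e ∈ pathEdges p}

/-- `ν*(G)`: the maximum over vertices `v` of the number of distinct edges
lying on shortest paths through `v`. -/
noncomputable def nuStar (G : WDigraph V) : ℕ :=
  G.verts.sup fun v => (G.spEdgesThru v).ncard

/-- `m*(G)`: the number of edges of `G` lying on at least one shortest path. -/
noncomputable def mStar (G : WDigraph V) : ℕ :=
  {e | ∃ p, G.IsSP p ∧ e ∈ pathEdges p}.ncard

/-- The induced weighted subgraph of `G` on the vertex set `S`. -/
def induce [DecidableEq V] (G : WDigraph V) (S : Finset V) : WDigraph V where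
  verts := G.verts ∩ S
  edges := G.edges.filter fun e => e.1 ∈ S ∧ e.2 ∈ S
  edges_sub := by
    intro e he
    rw [Finset.mem_filter] at he
    have h := G.edges_sub he.1
    rw [Finset.mem_product] at h ⊢
    exact ⟨Finset.mem_inter.mpr ⟨h.1, he.2.1⟩, Finset.mem_inter.mpr ⟨h.2, he.2.2⟩⟩
  w := G.w
  w_pos := fun e he => G.w_pos e (Finset.mem_filter.mp he).1

/-- Two weighted digraphs coincide: same vertices, same edges, and the same
weights on the edges. -/
def Coincide (G H : WDigraph V) : Prop :=
  G.verts = H.verts ∧ G.edges = H.edges ∧ ∀ e ∈ G.edges, G.w e = H.w e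

end WDigraph


namespace WDigraph

variable {V : Type*} {G : WDigraph V}

lemma pathEdges_single (a : V) : pathEdges [a] = ([] : List (V × V)) := rfl

lemma pathEdges_cons_cons (a b : V) (l : List V) :
    pathEdges (a :: b :: l) = (a, b) :: pathEdges (b :: l) := rfl

lemma pathEdges_split (p₁ : List V) (m : V) (p₂ : List V) :
    pathEdges (p₁ ++ m :: p₂) = pathEdges (p₁ ++ [m]) ++ pathEdges (m :: p₂) := by
  induction p₁ with
  | nil => simp [pathEdges_single]
  | cons a t ih =>
    cases t with
    | nil => simp [pathEdges_cons_cons, pathEdges_single]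
    | cons b t' =>
      simpa [pathEdges_cons_cons] using ih

lemma mem_pathEdges {e : V × V} {p : List V} (h : e ∈ pathEdges p) :
    ∃ l r, p = l ++ e.1 :: e.2 :: r := by
  induction p with
  | nil => simp [pathEdges] at h
  | cons a t ih =>
    cases t with
    | nil => simp [pathEdges_single] at h
    | cons b t' =>
      rw [pathEdges_cons_cons] at h
      rcases List.mem_cons.mp h with h | h
      · exact ⟨[], t', by simp [h]⟩
      · obtain ⟨l, r, hl⟩ := ih h
        exact ⟨a :: l, r, by simp [hl]⟩

lemma mem_pathEdges_of_split (l : List V) (a b : V) (r : List V) :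
    (a, b) ∈ pathEdges (l ++ a :: b :: r) := by
  rw [pathEdges_split l a (b :: r), pathEdges_cons_cons]
  simp

lemma length_pathEdges (p : List V) : (pathEdges p).length = p.length - 1 := by
  unfold pathEdges
  rw [List.length_zip, List.length_tail]
  omega

lemma weight_split (G : WDigraph V) (p₁ : List V) (m : V) (p₂ : List V) :
    G.weight (p₁ ++ m :: p₂) = G.weight (p₁ ++ [m]) + G.weight (m :: p₂) := by
  unfold weight
  rw [pathEdges_split]
  simp

lemma IsPathFT.split {p₁ p₂ : List V} {x y m : V}
    (h : G.IsPathFT (p₁ ++ m :: p₂) x y) :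
    G.IsPathFT (p₁ ++ [m]) x m ∧ G.IsPathFT (m :: p₂) m y := by
  obtain ⟨⟨hne, hv, he⟩, hh, hl⟩ := h
  have hlast : (m :: p₂).getLast? = some y := by
    rcases h' : (m :: p₂).getLast? with _ | c
    · simp [List.getLast?_eq_none_iff] at h'
    · rw [List.getLast?_append, h'] at hl
      simpa using hl
  refine ⟨⟨⟨by simp, ?_, ?_⟩, ?_, List.getLast?_concat⟩,
          ⟨⟨by simp, ?_, ?_⟩, rfl, hlast⟩⟩
  · intro u hu
    apply hv
    rcases List.mem_append.mp hu with h' | h'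
    · exact List.mem_append.mpr (Or.inl h')
    · simp at h'
      subst h'
      simp
  · intro e he'
    apply he
    rw [pathEdges_split]
    exact List.mem_append.mpr (Or.inl he')
  · cases p₁ <;> simpa using hh
  · intro u hu
    apply hv
    simp at hu ⊢
    tauto
  · intro e he'
    apply he
    rw [pathEdges_split]
    exact List.mem_append.mpr (Or.inr he')

lemma IsPathFT.concat {p q : List V} {x m y : V}
    (hp : G.IsPathFT p x m) (hq : G.IsPathFT q m y) :
    G.IsPathFT (p ++ q.tail) x y ∧ G.weight (p ++ q.tail) = G.weight p + G.weight q := by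
  obtain ⟨⟨hne, hv, he⟩, hh, hl⟩ := hp
  obtain ⟨⟨hne', hv', he'⟩, hh', hl'⟩ := hq
  -- q = m :: q.tail
  obtain ⟨t, rfl⟩ : ∃ t, q = m :: t := by
    cases q with
    | nil => simp at hh'
    | cons a t => simp at hh'; exact ⟨t, by rw [hh']⟩
  simp only [List.tail_cons]
  -- p = p.dropLast ++ [m]
  have hpl : p.dropLast ++ [m] = p := by
    rw [List.getLast?_eq_getLast hne, Option.some_inj] at hl
    rw [← hl]
    exact List.dropLast_append_getLast hne
  have hkey : p ++ t = p.dropLast ++ m :: t := by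
    conv_lhs => rw [← hpl]
    simp
  have hPE : pathEdges (p ++ t) = pathEdges p ++ pathEdges (m :: t) := by
    rw [hkey, pathEdges_split, hpl]
  constructor
  · refine ⟨⟨fun h => hne (List.append_eq_nil_iff.mp h).1, ?_, ?_⟩, ?_, ?_⟩
    · intro u hu
      rcases List.mem_append.mp hu with h' | h'
      · exact hv u h'
      · exact hv' u (List.mem_cons_of_mem m h')
    · intro e he''
      rw [hPE] at he''
      rcases List.mem_append.mp he'' with h' | h'
      · exact he e h'
      · exact he' e h'
    · cases p with
      | nil => exact absurd rfl hne
      | cons a t' => simpa using hh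
    · rw [hkey, List.getLast?_append, hl']
      rfl
  · unfold weight
    rw [hPE]
    simp


lemma IsSPFT.split {p₁ p₂ : List V} {x y m : V}
    (h : G.IsSPFT (p₁ ++ m :: p₂) x y) :
    G.IsSPFT (p₁ ++ [m]) x m ∧ G.IsSPFT (m :: p₂) m y := by
  obtain ⟨hp, hmin⟩ := h
  obtain ⟨h1, h2⟩ := hp.split
  have hws := G.weight_split p₁ m p₂
  constructor
  · refine ⟨h1, fun q hq => ?_⟩
    obtain ⟨hpath, hw⟩ := hq.concat h2
    have := hmin _ hpath
    linarith
  · refine ⟨h2, fun q hq => ?_⟩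
    obtain ⟨hpath, hw⟩ := h1.concat hq
    have := hmin _ hpath
    linarith

lemma finite_spft (G : WDigraph V) (x y : V) : {p : List V | G.IsSPFT p x y}.Finite := by
  classical
  set S := {p : List V | G.IsSPFT p x y} with hS
  rcases S.eq_empty_or_nonempty with h | ⟨p₀, hp₀⟩
  · simp [h]
  -- a uniform length bound
  obtain ⟨N, hN⟩ : ∃ N, ∀ p ∈ S, p.length ≤ N := by
    by_cases hE : G.edges.Nonempty
    · set δ := G.edges.inf' hE G.w with hδdef
      have hδ : 0 < δ := (Finset.lt_inf'_iff hE).mpr fun e he => G.w_pos e he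
      set W := G.weight p₀ with hW
      refine ⟨⌈W / δ⌉₊ + 1, fun p hp => ?_⟩
      have hple : G.weight p ≤ W := hp.2 p₀ hp₀.1
      have hlen : (pathEdges p).length • δ ≤ G.weight p := by
        have := List.card_nsmul_le_sum ((pathEdges p).map G.w) δ ?_
        · simpa [weight] using this
        · intro r hr
          obtain ⟨e, he, rfl⟩ := List.mem_map.mp hr
          exact Finset.inf'_le _ (hp.1.1.2.2 e he)
      have hcast : ((p.length - 1 : ℕ) : ℝ) ≤ W / δ := by
        rw [le_div_iff₀ hδ]
        have h2 := hlen.trans hple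
        rw [nsmul_eq_mul, length_pathEdges] at h2
        convert h2 using 3
      have : (p.length - 1 : ℕ) ≤ ⌈W / δ⌉₊ :=
        Nat.cast_le.mp (by exact_mod_cast hcast.trans (Nat.le_ceil _))
      omega
    · refine ⟨1, fun p hp => ?_⟩
      have : pathEdges p = [] := by
        rw [List.eq_nil_iff_forall_not_mem]
        intro e he
        exact hE ⟨e, hp.1.1.2.2 e he⟩
      have h1 := length_pathEdges p
      rw [this] at h1
      simp at h1
      omega
  have hsub : S ⊆ (List.map (Subtype.val : {v // v ∈ G.verts} → V)) ''
      {l : List {v // v ∈ G.verts} | l.length ≤ N} := by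
    intro p hp
    refine ⟨p.attach.map (fun z => ⟨z.1, hp.1.1.2.1 z.1 z.2⟩), by
      simpa using hN p hp, ?_⟩
    rw [List.map_map]
    simpa using List.attach_map_subtype_val p
  exact Set.Finite.subset (Set.Finite.image _ (List.finite_length_le _ N)) hsub

lemma fiber_count {k : ℕ} {s : Set (V × V)} (hs : s.Finite) (F : Finset V) (g : V × V → V)
    (hmem : ∀ e ∈ s, g e ∈ F) (hfib : ∀ y ∈ F, {e ∈ s | g e = y}.ncard ≤ k) :
    s.ncard ≤ k * F.card := by
  classical
  rw [Set.ncard_eq_toFinset_card s hs]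
  rw [Finset.card_eq_sum_card_fiberwise (f := g) (t := F)
    (fun e he => hmem e (hs.mem_toFinset.mp he))]
  calc ∑ b ∈ F, (hs.toFinset.filter fun e => g e = b).card
      ≤ ∑ _b ∈ F, k := by
        refine Finset.sum_le_sum fun b _ => ?_
        have : ((hs.toFinset.filter fun e => g e = b) : Set (V × V)) = {e ∈ s | g e = b} := by
          ext e
          simp [Set.Finite.mem_toFinset]
        calc (hs.toFinset.filter fun e => g e = b).card
            = ({e ∈ s | g e = b}).ncard := by rw [← this, Set.ncard_coe_finset]
          _ ≤ k := hfib b ‹b ∈ F›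
    _ = k * F.card := by rw [Finset.sum_const, smul_eq_mul, mul_comm]


lemma mem_A_or_B {v : V} {e : V × V} (he : e ∈ G.spEdgesThru v) :
    (∃ p, G.IsSPFT p v e.2 ∧ ∃ r, p = r ++ [e.1, e.2]) ∨
    (∃ p, G.IsSPFT p e.1 v ∧ ∃ q, p = e.1 :: e.2 :: q) := by
  obtain ⟨p, ⟨x, y, hsp⟩, hv, hePE⟩ := he
  obtain ⟨l, r, rfl⟩ := mem_pathEdges hePE
  have hv' : v ∈ l ++ [e.1] ∨ v ∈ e.2 :: r := by
    rcases List.mem_append.mp hv with h | h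
    · exact Or.inl (List.mem_append.mpr (Or.inl h))
    · rcases List.mem_cons.mp h with h | h
      · exact Or.inl (by simp [h])
      · exact Or.inr h
  rcases hv' with h | h
  · left
    obtain ⟨q₁, q₂, hq⟩ := List.append_of_mem h
    have hsp' : G.IsSPFT (q₁ ++ v :: (q₂ ++ e.2 :: r)) x y := by
      have heq : l ++ e.1 :: e.2 :: r = q₁ ++ v :: (q₂ ++ e.2 :: r) := by
        have : (l ++ [e.1]) ++ e.2 :: r = (q₁ ++ v :: q₂) ++ e.2 :: r := by rw [hq]
        simpa using this
      rwa [heq] at hsp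
    have h2 := hsp'.split.2
    have hshape : v :: (q₂ ++ e.2 :: r) = (v :: q₂) ++ e.2 :: r := by simp
    rw [hshape] at h2
    have h3 := h2.split.1
    have hne : (v :: q₂) ≠ [] := by simp
    have hlast : (v :: q₂).getLast? = some e.1 := by
      have h5 : (q₁ ++ v :: q₂).getLast? = (l ++ [e.1]).getLast? := by rw [hq]
      rw [List.getLast?_concat, List.getLast?_append] at h5
      rcases h' : (v :: q₂).getLast? with _ | c
      · simp [List.getLast?_eq_none_iff] at h'
      · rw [h'] at h5
        simpa using h5
    have hdl : (v :: q₂).dropLast ++ [e.1] = v :: q₂ := by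
      rw [List.getLast?_eq_getLast hne, Option.some_inj] at hlast
      rw [← hlast]
      exact List.dropLast_append_getLast hne
    refine ⟨(v :: q₂) ++ [e.2], h3, (v :: q₂).dropLast, ?_⟩
    conv_lhs => rw [← hdl]
    simp
  · right
    obtain ⟨s₁, s₂, hs⟩ := List.append_of_mem h
    have h2 := hsp.split.2
    have hshape : e.1 :: (e.2 :: r) = (e.1 :: s₁) ++ v :: s₂ := by rw [hs]; simp
    rw [hshape] at h2
    have h3 := h2.split.1
    cases s₁ with
    | nil =>
      have hv2 : v = e.2 := by
        simp at hs
        exact hs.1.symm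
      exact ⟨(e.1 :: []) ++ [v], h3, [], by simp [hv2]⟩
    | cons c s₁' =>
      have hc : c = e.2 := by
        simp at hs
        exact hs.1.symm
      exact ⟨(e.1 :: c :: s₁') ++ [v], h3, s₁' ++ [v], by simp [hc]⟩

end WDigraph

open WDigraph in
/-- If every ordered pair of vertices has at most `k` shortest paths, then at
most `2kn` distinct edges lie on shortest paths through any vertex, so
`ν*(G) ≤ 2kn`. -/
theorem stmt15 {V : Type*} (G : WDigraph V) (n : ℕ) (hn : G.verts.card = n)
    (k : ℕ) (hk : 1 ≤ k)
    (hsp : ∀ x y : V, {p : List V | G.IsSPFT p x y}.ncard ≤ k) :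
    (∀ v : V, (G.spEdgesThru v).ncard ≤ 2 * k * n) ∧ G.nuStar ≤ 2 * k * n := by
  classical
  have hfinE : (↑G.edges : Set (V × V)).Finite := G.edges.finite_toSet
  have key : ∀ v : V, (G.spEdgesThru v).ncard ≤ 2 * k * n := by
    intro v
    set A : Set (V × V) := {e | ∃ p, G.IsSPFT p v e.2 ∧ ∃ r, p = r ++ [e.1, e.2]} with hA
    set B : Set (V × V) := {e | ∃ p, G.IsSPFT p e.1 v ∧ ∃ q, p = e.1 :: e.2 :: q} with hB
    have hAedge : A ⊆ ↑G.edges := by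
      rintro e ⟨p, hp, r, rfl⟩
      exact hp.1.1.2.2 e (by simpa using mem_pathEdges_of_split r e.1 e.2 [])
    have hBedge : B ⊆ ↑G.edges := by
      rintro e ⟨p, hp, q, rfl⟩
      exact hp.1.1.2.2 e (by simpa using mem_pathEdges_of_split [] e.1 e.2 q)
    have hAfin := hfinE.subset hAedge
    have hBfin := hfinE.subset hBedge
    have hAcard : A.ncard ≤ k * n := by
      rw [← hn]
      refine fiber_count hAfin G.verts Prod.snd ?_ ?_
      · intro e heA
        have h1 : e ∈ G.edges := hAedge heA
        exact (Finset.mem_product.mp (G.edges_sub h1)).2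
      · intro y _
        set f : V × V → List V := fun e =>
          if h : ∃ p, G.IsSPFT p v e.2 ∧ ∃ r, p = r ++ [e.1, e.2] then h.choose else []
          with hf
        refine (Set.ncard_le_ncard_of_injOn f ?_ ?_ (G.finite_spft v y)).trans (hsp v y)
        · rintro e ⟨heA, hey⟩
          have h : ∃ p, G.IsSPFT p v e.2 ∧ ∃ r, p = r ++ [e.1, e.2] := heA
          have hfe : f e = h.choose := by rw [hf]; exact dif_pos h
          have := h.choose_spec.1
          rw [hfe]
          subst hey
          exact this
        · rintro e ⟨heA, hey⟩ e' ⟨heA', hey'⟩ hfe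
          have h : ∃ p, G.IsSPFT p v e.2 ∧ ∃ r, p = r ++ [e.1, e.2] := heA
          have h' : ∃ p, G.IsSPFT p v e'.2 ∧ ∃ r, p = r ++ [e'.1, e'.2] := heA'
          rw [hf] at hfe
          simp only [] at hfe
          rw [dif_pos h, dif_pos h'] at hfe
          obtain ⟨r, hr⟩ := h.choose_spec.2
          obtain ⟨r', hr'⟩ := h'.choose_spec.2
          rw [hr, hr'] at hfe
          have := (List.append_inj' hfe rfl).2
          simp at this
          exact Prod.ext this.1 this.2
    have hBcard : B.ncard ≤ k * n := by
      rw [← hn]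
      refine fiber_count hBfin G.verts Prod.fst ?_ ?_
      · intro e heB
        have h1 : e ∈ G.edges := hBedge heB
        exact (Finset.mem_product.mp (G.edges_sub h1)).1
      · intro x _
        set f : V × V → List V := fun e =>
          if h : ∃ p, G.IsSPFT p e.1 v ∧ ∃ q, p = e.1 :: e.2 :: q then h.choose else []
          with hf
        refine (Set.ncard_le_ncard_of_injOn f ?_ ?_ (G.finite_spft x v)).trans (hsp x v)
        · rintro e ⟨heB, hex⟩
          have h : ∃ p, G.IsSPFT p e.1 v ∧ ∃ q, p = e.1 :: e.2 :: q := heB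
          have hfe : f e = h.choose := by rw [hf]; exact dif_pos h
          have := h.choose_spec.1
          rw [hfe]
          subst hex
          exact this
        · rintro e ⟨heB, hex⟩ e' ⟨heB', hex'⟩ hfe
          have h : ∃ p, G.IsSPFT p e.1 v ∧ ∃ q, p = e.1 :: e.2 :: q := heB
          have h' : ∃ p, G.IsSPFT p e'.1 v ∧ ∃ q, p = e'.1 :: e'.2 :: q := heB'
          rw [hf] at hfe
          simp only [] at hfe
          rw [dif_pos h, dif_pos h'] at hfe
          obtain ⟨q, hq⟩ := h.choose_spec.2
          obtain ⟨q', hq'⟩ := h'.choose_spec.2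
          rw [hq, hq'] at hfe
          simp at hfe
          exact Prod.ext hfe.1 hfe.2.1
    have hsub : G.spEdgesThru v ⊆ A ∪ B := fun e he => mem_A_or_B he
    calc (G.spEdgesThru v).ncard
        ≤ (A ∪ B).ncard := Set.ncard_le_ncard hsub (hAfin.union hBfin)
      _ ≤ A.ncard + B.ncard := Set.ncard_union_le A B
      _ ≤ k * n + k * n := add_le_add hAcard hBcard
      _ = 2 * k * n := by ring
  exact ⟨key, Finset.sup_le fun v _ => key v⟩

end Apasp
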